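/- Let n ∈ ℕ, let L be a symmetric positive definite n×n real matrix, and let h > 0. Define the 2n×2n block matrices A(h) = [[I, (h/2)I], [-(h/2)L, I]] and B(h) = [[I, -(h/2)I], [(h/2)L, I]]. Then B(h) is invertible and for every vector w = (x, y) ∈ ℝⁿ × ℝⁿ, ‖B(h)⁻¹A(h)w‖² = ‖w‖², where ‖(x,y)‖² = ⟨L x, x⟩ + ⟨y, y⟩. -/

import Mathlib

open Matrix

private lemma smul_posSemidef' {m : Type*} [Fintype m] {c : ℝ} (hc : 0 ≤ c)
    {M : Matrix m m ℝ} (hM : M.PosSemidef) : (c • M).PosSemidef := by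
  refine ⟨?_, fun x => ?_⟩
  · have h1 : Mᴴ = M := hM.1
    show (c • M)ᴴ = c • M
    rw [Matrix.conjTranspose_smul, h1]
    simp
  · exact (hM.smul hc).2 x

private lemma skew_quad {m : Type*} [Fintype m] (N : Matrix m m ℝ)
    (hN : Nᵀ = -N) (p : m → ℝ) : N.mulVec p ⬝ᵥ p = 0 := by
  have h1 : N.mulVec p ⬝ᵥ p = p ⬝ᵥ N.mulVec p := dotProduct_comm _ _
  have h2 : p ⬝ᵥ N.mulVec p = Nᵀ.mulVec p ⬝ᵥ p := by
    rw [Matrix.dotProduct_mulVec, ← Matrix.mulVec_transpose]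
  rw [h2, hN] at h1
  simp only [Matrix.neg_mulVec, neg_dotProduct] at h1
  linarith

private lemma symm_bilin {m : Type*} [Fintype m] (M : Matrix m m ℝ)
    (hM : Mᵀ = M) (x y : m → ℝ) : M.mulVec x ⬝ᵥ y = M.mulVec y ⬝ᵥ x := by
  rw [dotProduct_comm, Matrix.dotProduct_mulVec, ← Matrix.mulVec_transpose, hM]

theorem cayley_propagator_isometry (n : ℕ) (L : Matrix (Fin n) (Fin n) ℝ)
    (hsymm : L.IsSymm) (hpos : L.PosDef) (h : ℝ) (hh : 0 < h)
    (A B : Matrix (Fin n ⊕ Fin n) (Fin n ⊕ Fin n) ℝ)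
    (hA : A = Matrix.fromBlocks 1 ((h / 2) • 1) (-((h / 2) • L)) 1)
    (hB : B = Matrix.fromBlocks 1 (-((h / 2) • 1)) ((h / 2) • L) 1) :
    IsUnit B ∧
      ∀ w : Fin n ⊕ Fin n → ℝ,
        (L.mulVec (fun i => (B⁻¹ * A).mulVec w (Sum.inl i))) ⬝ᵥ
            (fun i => (B⁻¹ * A).mulVec w (Sum.inl i)) +
          (fun i => (B⁻¹ * A).mulVec w (Sum.inr i)) ⬝ᵥ
            (fun i => (B⁻¹ * A).mulVec w (Sum.inr i)) =
        (L.mulVec (fun i => w (Sum.inl i))) ⬝ᵥ (fun i => w (Sum.inl i)) +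
          (fun i => w (Sum.inr i)) ⬝ᵥ (fun i => w (Sum.inr i)) := by
  have hLT : Lᵀ = L := hsymm
  have hc : (0:ℝ) < h / 2 * (h / 2) := by positivity
  set S : Matrix (Fin n ⊕ Fin n) (Fin n ⊕ Fin n) ℝ :=
    Matrix.fromBlocks 0 (-((h / 2) • 1)) ((h / 2) • L) 0 with hS
  set M : Matrix (Fin n ⊕ Fin n) (Fin n ⊕ Fin n) ℝ :=
    Matrix.fromBlocks L 0 0 1 with hM
  have hBS : B = 1 + S := by
    rw [hB, hS, ← Matrix.fromBlocks_one, Matrix.fromBlocks_add]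
    congr 1 <;> simp
  have hAS : A = 1 - S := by
    rw [hA, hS, ← Matrix.fromBlocks_one, sub_eq_add_neg, Matrix.fromBlocks_neg,
      Matrix.fromBlocks_add]
    congr 1 <;> simp
  have hBdet : IsUnit B.det := by
    have hposM : ((1 : Matrix (Fin n) (Fin n) ℝ) + (h / 2 * (h / 2)) • L).PosDef :=
      Matrix.PosDef.add_posSemidef Matrix.PosDef.one (smul_posSemidef' hc.le hpos.posSemidef)
    have hdet : B.det = ((1 : Matrix (Fin n) (Fin n) ℝ) + (h / 2 * (h / 2)) • L).det := by
      rw [hB, Matrix.det_fromBlocks_one₂₂]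
      congr 1
      rw [Matrix.neg_mul, sub_neg_eq_add, Matrix.smul_mul, Matrix.one_mul, smul_smul]
    rw [hdet]
    exact hposM.det_pos.ne'.isUnit
  have hBunit : IsUnit B := (Matrix.isUnit_iff_isUnit_det B).2 hBdet
  refine ⟨hBunit, fun w => ?_⟩
  set u : Fin n ⊕ Fin n → ℝ := (B⁻¹ * A).mulVec w with hu
  have hBuAw : B.mulVec u = A.mulVec w := by
    rw [hu, Matrix.mulVec_mulVec, ← Matrix.mul_assoc, Matrix.mul_nonsing_inv B hBdet,
      Matrix.one_mul]
  have hcon : S.mulVec (u + w) = w - u := by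
    rw [hBS, hAS] at hBuAw
    simp only [Matrix.add_mulVec, Matrix.sub_mulVec, Matrix.one_mulVec] at hBuAw
    rw [Matrix.mulVec_add]
    linear_combination hBuAw
  have hMsymm : Mᵀ = M := by
    rw [hM, Matrix.fromBlocks_transpose, hLT]
    simp
  have hskew : (M * S)ᵀ = -(M * S) := by
    rw [hM, hS, Matrix.fromBlocks_multiply]
    simp [Matrix.fromBlocks_transpose, Matrix.fromBlocks_neg, Matrix.mul_smul, Matrix.smul_mul,
      Matrix.transpose_smul, hLT]
  have energy : ∀ v : Fin n ⊕ Fin n → ℝ,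
      M.mulVec v ⬝ᵥ v =
        (L.mulVec (fun i => v (Sum.inl i))) ⬝ᵥ (fun i => v (Sum.inl i)) +
          (fun i => v (Sum.inr i)) ⬝ᵥ (fun i => v (Sum.inr i)) := by
    intro v
    rw [hM, Matrix.fromBlocks_mulVec]
    simp only [Matrix.zero_mulVec, Matrix.one_mulVec, add_zero, zero_add]
    simp [dotProduct, Fintype.sum_sum_type, Function.comp_def]
  have key : M.mulVec (S.mulVec (u + w)) ⬝ᵥ (u + w) = 0 := by
    rw [Matrix.mulVec_mulVec]
    exact skew_quad _ hskew _
  rw [hcon, Matrix.mulVec_sub, sub_dotProduct, dotProduct_add, dotProduct_add] at key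
  have hsym1 : M.mulVec w ⬝ᵥ u = M.mulVec u ⬝ᵥ w := symm_bilin M hMsymm w u
  rw [← energy u, ← energy w]
  linarith [key, hsym1]
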